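/- arXiv:1310.5534 — 4 statements merged into one kernel-verified Lean document; each statement's English description precedes it below -/
import Mathlib

section
/- Consider the car–truck congestion game with zero congestion taxes, car utilities U_i(z,x) = ξ_i^c(z_i) + a·n_{z_i}(z,x) + b, and truck utilities V_j(x,z) = ξ_j^t(x_j) + a·n_{x_j}(z,x) + b + β(a·n_{x_j}(z,x)+b)·g(m_{x_j}(x)), where a ≠ 0, |R| ≥ 2, N ≥ 1, M ≥ 1, and g is a nondecreasing function with g(1) > 0. If β ≠ 0, then the game does not admit an exact potential function. -/
/-- `n_r(z,x)`: total number of vehicles (cars and trucks) using interval `r`. -/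
def nCount {R : Type*} [DecidableEq R] {N M : ℕ}
    (z : Fin N → R) (x : Fin M → R) (r : R) : ℕ :=
  (Finset.univ.filter fun ℓ => z ℓ = r).card + (Finset.univ.filter fun ℓ => x ℓ = r).card

/-- `m_r(x)`: number of trucks using interval `r`. -/
def mCount {R : Type*} [DecidableEq R] {M : ℕ} (x : Fin M → R) (r : R) : ℕ :=
  (Finset.univ.filter fun ℓ => x ℓ = r).card

/-- Car utility with zero tax. -/
def carU {R : Type*} [DecidableEq R] {N M : ℕ} (a b : ℝ) (ξc : Fin N → R → ℝ)
    (i : Fin N) (z : Fin N → R) (x : Fin M → R) : ℝ :=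
  ξc i (z i) + a * (nCount z x (z i) : ℝ) + b

/-- Truck utility with zero tax. -/
def truckU {R : Type*} [DecidableEq R] {N M : ℕ} (a b β : ℝ) (g : ℕ → ℝ)
    (ξt : Fin M → R → ℝ) (j : Fin M) (x : Fin M → R) (z : Fin N → R) : ℝ :=
  ξt j (x j) + a * (nCount z x (x j) : ℝ) + b
    + β * (a * (nCount z x (x j) : ℝ) + b) * g (mCount x (x j))

lemma filt_const {R : Type*} [DecidableEq R] {n : ℕ} (r : R) :
    (Finset.univ.filter fun ℓ : Fin n => (fun _ : Fin n => r) ℓ = r).card = n := by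
  simp

lemma filt_const_ne {R : Type*} [DecidableEq R] {n : ℕ} {r s : R} (h : r ≠ s) :
    (Finset.univ.filter fun ℓ : Fin n => (fun _ : Fin n => r) ℓ = s).card = 0 := by
  simp [h]

lemma filt_upd_eq {R : Type*} [DecidableEq R] {n : ℕ} {r s : R} (h : r ≠ s) (i : Fin n) :
    (Finset.univ.filter fun ℓ => Function.update (fun _ : Fin n => r) i s ℓ = s).card = 1 := by
  have e : (Finset.univ.filter fun ℓ => Function.update (fun _ : Fin n => r) i s ℓ = s) = {i} := by
    ext ℓ
    rcases eq_or_ne ℓ i with h' | h' <;> simp [Function.update_apply, h', h]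
  rw [e, Finset.card_singleton]

lemma filt_upd_ne {R : Type*} [DecidableEq R] {n : ℕ} {r s : R} (h : r ≠ s) (i : Fin n) :
    (Finset.univ.filter fun ℓ => Function.update (fun _ : Fin n => r) i s ℓ = r).card = n - 1 := by
  have e : (Finset.univ.filter fun ℓ => Function.update (fun _ : Fin n => r) i s ℓ = r)
      = Finset.univ \ {i} := by
    ext ℓ
    rcases eq_or_ne ℓ i with h' | h' <;> simp [Function.update_apply, h', h.symm]
  rw [e]
  simp [Finset.card_sdiff_of_subset]

/-- with zero congestion taxes, `a ≠ 0`, `|R| ≥ 2`, `N ≥ 1`, `M ≥ 1`,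
`g` nondecreasing on `{1,…,M}` with `g(1) > 0`, and `β ≠ 0`, the car–truck
congestion game does not admit an exact potential function. -/
theorem no_exact_potential {R : Type*} [Fintype R] [DecidableEq R]
    (hR : 2 ≤ Fintype.card R) {N M : ℕ} (hN : 1 ≤ N) (hM : 1 ≤ M)
    (a b β : ℝ) (ha : a ≠ 0) (hβ : β ≠ 0)
    (g : ℕ → ℝ) (hg : ∀ k, 1 ≤ k → k < M → g k ≤ g (k + 1)) (hg1 : 0 < g 1)
    (ξc : Fin N → R → ℝ) (ξt : Fin M → R → ℝ) :
    ¬ ∃ Φ : (Fin M → R) → (Fin N → R) → ℝ,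
      (∀ (i : Fin N) (z : Fin N → R) (x : Fin M → R) (c : R),
        Φ x z - Φ x (Function.update z i c)
          = carU a b ξc i z x - carU a b ξc i (Function.update z i c) x) ∧
      (∀ (j : Fin M) (x : Fin M → R) (z : Fin N → R) (c : R),
        Φ x z - Φ (Function.update x j c) z
          = truckU a b β g ξt j x z - truckU a b β g ξt j (Function.update x j c) z) := by
  rintro ⟨Φ, hcar, htruck⟩
  -- two distinct routes
  obtain ⟨r, s, hrs⟩ := Fintype.exists_pair_of_one_lt_card hR
  -- g 1 ≤ g M
  have hgM : g 1 ≤ g M := by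
    have key : ∀ k, 1 ≤ k → k ≤ M → g 1 ≤ g k := by
      intro k
      induction k with
      | zero => omega
      | succ k ih =>
        intro _ hk
        rcases Nat.eq_zero_or_pos k with hk0 | hk0
        · subst hk0; exact le_refl _
        · exact le_trans (ih hk0 (by omega)) (hg k hk0 (by omega))
    exact key M hM le_rfl
  set i0 : Fin N := ⟨0, hN⟩
  set j0 : Fin M := ⟨0, hM⟩
  set zr : Fin N → R := fun _ => r with hzr
  set xr : Fin M → R := fun _ => r with hxr
  set zs : Fin N → R := Function.update zr i0 s with hzs
  set xs : Fin M → R := Function.update xr j0 s with hxs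
  have hzback : Function.update zs i0 r = zr := by
    rw [hzs, Function.update_idem]
    exact Function.update_eq_self i0 zr
  have hxback : Function.update xs j0 r = xr := by
    rw [hxs, Function.update_idem]
    exact Function.update_eq_self j0 xr
  -- the four potential equations around the cycle
  have E1 := hcar i0 zr xr s
  have E3 := hcar i0 zs xs r
  have E2 := htruck j0 xr zs s
  have E4 := htruck j0 xs zr r
  rw [← hzs] at E1
  rw [hzback] at E3
  rw [← hxs] at E2
  rw [hxback] at E4
  have cycle : (carU a b ξc i0 zr xr - carU a b ξc i0 zs xr)
      + (truckU a b β g ξt j0 xr zs - truckU a b β g ξt j0 xs zs)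
      + (carU a b ξc i0 zs xs - carU a b ξc i0 zr xs)
      + (truckU a b β g ξt j0 xs zr - truckU a b β g ξt j0 xr zr) = 0 := by
    rw [← E1, ← E2, ← E3, ← E4]; ring
  -- evaluate all the counts
  have hzri : zr i0 = r := rfl
  have hzsi : zs i0 = s := Function.update_self i0 s zr
  have hxri : xr j0 = r := rfl
  have hxsi : xs j0 = s := Function.update_self j0 s xr
  have n1 : nCount zr xr r = N + M := by
    rw [nCount, hzr, hxr, filt_const, filt_const]
  have n2 : nCount zs xr s = 1 := by
    rw [nCount, hzs, hzr, hxr, filt_upd_eq hrs, filt_const_ne hrs]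
  have n3 : nCount zs xs s = 2 := by
    rw [nCount, hzs, hzr, hxs, hxr, filt_upd_eq hrs, filt_upd_eq hrs]
  have n4 : nCount zr xs r = N + (M - 1) := by
    rw [nCount, hzr, hxs, hxr, filt_const, filt_upd_ne hrs]
  have n5 : nCount zs xr r = (N - 1) + M := by
    rw [nCount, hzs, hzr, hxr, filt_upd_ne hrs, filt_const]
  have n6 : nCount zr xs s = 1 := by
    rw [nCount, hzr, hxs, hxr, filt_const_ne hrs, filt_upd_eq hrs]
  have m1 : mCount xr r = M := by rw [mCount, hxr, filt_const]
  have m2 : mCount xs s = 1 := by rw [mCount, hxs, hxr, filt_upd_eq hrs]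
  -- substitute into the cycle equation
  rw [carU, carU, carU, carU, truckU, truckU, truckU, truckU,
    hzri, hzsi, hxri, hxsi, n1, n2, n3, n4, n5, n6, m1, m2] at cycle
  have castN : ((N - 1 : ℕ) : ℝ) = (N : ℝ) - 1 := by
    have := Nat.cast_sub hN (R := ℝ); simpa using this
  have castM : ((M - 1 : ℕ) : ℝ) = (M : ℝ) - 1 := by
    have := Nat.cast_sub hM (R := ℝ); simpa using this
  push_cast [castN, castM] at cycle
  have key : a * β * (g M + g 1) = 0 := by linear_combination -cycle
  have hsum : 0 < g M + g 1 := by linarith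
  have : a * β ≠ 0 := mul_ne_zero ha hβ
  exact this (by
    rcases mul_eq_zero.mp key with h | h
    · exact h
    · exact absurd h (ne_of_gt hsum))
end

section
/- Every finite game (finitely many players, each with a finite action set) that admits an exact potential function has at least one pure strategy Nash equilibrium; moreover, any maximizer of the potential function over the joint action space is a pure strategy Nash equilibrium. -/
/-- every finite game admitting an exact potential function has a
pure strategy Nash equilibrium; moreover any maximizer of the potential over the
joint action space is a pure strategy Nash equilibrium. -/
theorem finite_potential_game_has_pure_nash {ι : Type*} [Fintype ι] [DecidableEq ι]
    (A : ι → Type*) [∀ p, Fintype (A p)] [∀ p, Nonempty (A p)]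
    (u : ∀ _ : ι, (∀ q, A q) → ℝ) (Φ : (∀ q, A q) → ℝ)
    (hΦ : ∀ (p : ι) (s : ∀ q, A q) (a : A p),
      Φ (Function.update s p a) - Φ s = u p (Function.update s p a) - u p s) :
    (∃ s : ∀ q, A q, ∀ (p : ι) (a : A p), u p (Function.update s p a) ≤ u p s) ∧
    (∀ s : ∀ q, A q, (∀ t, Φ t ≤ Φ s) →
      ∀ (p : ι) (a : A p), u p (Function.update s p a) ≤ u p s) := by
  have key : ∀ s : ∀ q, A q, (∀ t, Φ t ≤ Φ s) →
      ∀ (p : ι) (a : A p), u p (Function.update s p a) ≤ u p s := by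
    intro s hs p a
    have h := hΦ p s a
    have := hs (Function.update s p a)
    linarith
  refine ⟨?_, key⟩
  obtain ⟨s, -, hs⟩ := Finset.exists_max_image Finset.univ Φ ⟨Classical.arbitrary _, Finset.mem_univ _⟩
  exact ⟨s, key s (fun t => hs t (Finset.mem_univ t))⟩
end

section
/- In the car–truck congestion game with the truck subsidy policy (truck utility V_j(x,z) = ξ_j^t(x_j) + (a·n_{x_j}(z,x)+b) + β·v_0·g(m_{x_j}(x)), car utility U_i(z,x) = ξ_i^c(z_i) + (a·n_{z_i}(z,x)+b)), for a unilateral truck deviation from x_j to x'_j ≠ x_j (with x' = (x'_j, x_{-j})), the change in the potential Ψ of Theorem 2 satisfies Ψ(x,z) − Ψ(x',z) = ξ_j^t(x_j) − ξ_j^t(x'_j) + (a·n_{x_j}(x,z)+b) − (a·n_{x'_j}(x',z)+b) + β·v_0·(g(m_{x_j}(x)) − g(m_{x'_j}(x'))) = V_j(x,z) − V_j(x',z). -/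
/-- Truck utility under the subsidy policy of Theorem 2. -/
def truckUsub {R : Type*} [DecidableEq R] {N M : ℕ} (a b β v0 : ℝ) (g : ℕ → ℝ)
    (ξt : Fin M → R → ℝ) (j : Fin M) (x : Fin M → R) (z : Fin N → R) : ℝ :=
  ξt j (x j) + (a * (nCount z x (x j) : ℝ) + b) + β * v0 * g (mCount x (x j))

/-- The potential function Ψ of Theorem 2. -/
def Psi {R : Type*} [Fintype R] [DecidableEq R] {N M : ℕ} (a b β v0 : ℝ) (g : ℕ → ℝ)
    (ξc : Fin N → R → ℝ) (ξt : Fin M → R → ℝ)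
    (x : Fin M → R) (z : Fin N → R) : ℝ :=
  (∑ i, ξc i (z i)) + (∑ j, ξt j (x j))
    + (∑ r : R, ∑ k ∈ Finset.Icc 1 (nCount z x r), (a * (k : ℝ) + b))
    + β * v0 * ∑ r : R, ∑ ℓ ∈ Finset.Icc 1 (mCount x r), g ℓ


private lemma filter_eq_split {R : Type*} [DecidableEq R] {M : ℕ}
    (x : Fin M → R) (j : Fin M) (r : R) :
    (Finset.univ.filter fun ℓ => x ℓ = r).card
      = ((Finset.univ.erase j).filter fun ℓ => x ℓ = r).card
        + (if x j = r then 1 else 0) := by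
  rw [Finset.card_filter, Finset.card_filter,
    ← Finset.sum_erase_add _ _ (Finset.mem_univ j)]

private lemma filter_erase_update {R : Type*} [DecidableEq R] {M : ℕ}
    (x : Fin M → R) (j : Fin M) (c r : R) :
    ((Finset.univ.erase j).filter fun ℓ => Function.update x j c ℓ = r).card
      = ((Finset.univ.erase j).filter fun ℓ => x ℓ = r).card := by
  congr 1
  apply Finset.filter_congr
  intro ℓ hℓ
  rw [Function.update_of_ne (Finset.ne_of_mem_erase hℓ)]

private lemma sum_shift {R : Type*} [Fintype R] [DecidableEq R] (f : ℕ → ℝ) (n n' : R → ℕ)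
    (p q : R) (hpq : p ≠ q)
    (hp : n' p + 1 = n p) (hq : n' q = n q + 1)
    (ho : ∀ r, r ≠ p → r ≠ q → n' r = n r) :
    (∑ r, ∑ k ∈ Finset.Icc 1 (n r), f k) - (∑ r, ∑ k ∈ Finset.Icc 1 (n' r), f k)
      = f (n p) - f (n' q) := by
  rw [← Finset.sum_sub_distrib]
  have hz : ∀ r ∈ Finset.univ, r ∉ ({p, q} : Finset R) →
      (∑ k ∈ Finset.Icc 1 (n r), f k) - (∑ k ∈ Finset.Icc 1 (n' r), f k) = 0 := by
    intro r _ hr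
    simp only [Finset.mem_insert, Finset.mem_singleton, not_or] at hr
    rw [ho r hr.1 hr.2]; ring
  rw [← Finset.sum_subset (Finset.subset_univ {p, q}) hz, Finset.sum_pair hpq,
    ← hp, hq, Finset.sum_Icc_succ_top (by omega : 1 ≤ n' p + 1) f,
    Finset.sum_Icc_succ_top (by omega : 1 ≤ n q + 1) f]
  ring

/-- for a unilateral truck deviation `x' = (x'_j, x_{-j})` with
`x_j ≠ x'_j`, the change in the potential Ψ equals the displayed expression,
which equals the change in the truck utility. -/
theorem psi_truck_deviation {R : Type*} [Fintype R] [DecidableEq R] {N M : ℕ}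
    (a b β v0 : ℝ) (g : ℕ → ℝ) (ξc : Fin N → R → ℝ) (ξt : Fin M → R → ℝ)
    (z : Fin N → R) (x : Fin M → R) (j : Fin M) (c : R) (h : x j ≠ c) :
    Psi a b β v0 g ξc ξt x z - Psi a b β v0 g ξc ξt (Function.update x j c) z
      = ξt j (x j) - ξt j c
        + ((a * (nCount z x (x j) : ℝ) + b)
            - (a * (nCount z (Function.update x j c) c : ℝ) + b))
        + β * v0 * (g (mCount x (x j)) - g (mCount (Function.update x j c) c)) ∧
    Psi a b β v0 g ξc ξt x z - Psi a b β v0 g ξc ξt (Function.update x j c) z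
      = truckUsub a b β v0 g ξt j x z
        - truckUsub a b β v0 g ξt j (Function.update x j c) z := by

  set x' := Function.update x j c with hx'
  have hupj : x' j = c := Function.update_self j c x
  -- truck count shift facts
  have mkey : ∀ r : R, mCount x' r + (if x j = r then 1 else 0)
      = mCount x r + (if c = r then 1 else 0) := by
    intro r
    unfold x'
    unfold mCount
    rw [filter_eq_split x j r, filter_eq_split (Function.update x j c) j r,
      filter_erase_update, Function.update_self]
    ring
  have hcx : ¬ c = x j := fun e => h e.symm
  have hm1 : mCount x' (x j) + 1 = mCount x (x j) := by
    have := mkey (x j)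
    simpa [h, hcx] using this
  have hm2 : mCount x' c = mCount x c + 1 := by
    have := mkey c
    simpa [h] using this
  have hm3 : ∀ r, r ≠ x j → r ≠ c → mCount x' r = mCount x r := by
    intro r h1 h2
    have := mkey r
    have e1 : ¬ x j = r := fun e => h1 e.symm
    have e2 : ¬ c = r := fun e => h2 e.symm
    simpa [e1, e2] using this
  -- vehicle count shift facts
  have nrfl : ∀ (y : Fin M → R) r, nCount z y r
      = (Finset.univ.filter fun ℓ => z ℓ = r).card + mCount y r := fun y r => rfl
  have hn1 : nCount z x' (x j) + 1 = nCount z x (x j) := by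
    rw [nrfl, nrfl]; omega
  have hn2 : nCount z x' c = nCount z x c + 1 := by
    rw [nrfl, nrfl]; omega
  have hn3 : ∀ r, r ≠ x j → r ≠ c → nCount z x' r = nCount z x r := by
    intro r h1 h2
    rw [nrfl, nrfl]
    have := hm3 r h1 h2
    omega
  -- sum differences
  have D1 := sum_shift (fun k => a * (k : ℝ) + b) (nCount z x) (nCount z x')
    (x j) c h hn1 hn2 hn3
  have D2 := sum_shift g (mCount x) (mCount x') (x j) c h hm1 hm2 hm3
  -- ξt sum
  have T : (∑ i, ξt i (x i)) - (∑ i, ξt i (x' i)) = ξt j (x j) - ξt j c := by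
    rw [← Finset.sum_erase_add _ (fun i => ξt i (x i)) (Finset.mem_univ j),
      ← Finset.sum_erase_add _ (fun i => ξt i (x' i)) (Finset.mem_univ j)]
    have : ∀ i ∈ Finset.univ.erase j, ξt i (x' i) = ξt i (x i) := by
      intro i hi
      unfold x'
      rw [Function.update_of_ne (Finset.ne_of_mem_erase hi)]
    rw [Finset.sum_congr rfl this, hupj]
    ring
  have main : Psi a b β v0 g ξc ξt x z - Psi a b β v0 g ξc ξt x' z
      = ξt j (x j) - ξt j c
        + ((a * (nCount z x (x j) : ℝ) + b) - (a * (nCount z x' c : ℝ) + b))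
        + β * v0 * (g (mCount x (x j)) - g (mCount x' c)) := by
    unfold Psi
    have expand : ∀ A T1 S1 S2 A' T2 S1' S2' : ℝ,
        (A + T1 + S1 + β * v0 * S2) - (A' + T2 + S1' + β * v0 * S2')
          = (A - A') + (T1 - T2) + (S1 - S1') + β * v0 * (S2 - S2') := by
      intros; ring
    rw [expand, sub_self, T, D1, D2]
    ring
  refine ⟨main, ?_⟩
  rw [main]
  unfold truckUsub
  rw [hupj]
  ring
end

section
/- In the car–truck congestion game with the car tax of Theorem 1 (U_i(z,x) = ξ_i^c(z_i) + (a·n_{z_i}(z,x)+b) + aβ·Σ_{ℓ=1}^{m_{z_i}(x)} g(ℓ)), for a unilateral car deviation from z_i to z'_i ≠ z_i (with z' = (z'_i, z_{-i})), the term Φ_4(x,z) = −aβ·Σ_{r∈R} Σ_{ℓ=1}^{m_r(x)} Σ_{k=1}^{ℓ−1} g(k) is unchanged, and the full potential Φ of Theorem 1 satisfies Φ(x,z) − Φ(x,z') = ξ_i^c(z_i) − ξ_i^c(z'_i) + (a·n_{z_i}(z,x)+b) − (a·n_{z'_i}(z',x)+b) + aβ·(Σ_{ℓ=1}^{m_{z_i}(x)}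 g(ℓ) − Σ_{ℓ=1}^{m_{z'_i}(x)} g(ℓ)) = U_i(z,x) − U_i(z',x). -/
/-- Car utility with the congestion tax of Theorem 1:
`U_i(z,x) = ξ_i^c(z_i) + (a·n_{z_i}(z,x)+b) + aβ·Σ_{ℓ=1}^{m_{z_i}(x)} g(ℓ)`. -/
def carUtax {R : Type*} [DecidableEq R] {N M : ℕ} (a b β : ℝ) (g : ℕ → ℝ)
    (ξc : Fin N → R → ℝ) (i : Fin N) (z : Fin N → R) (x : Fin M → R) : ℝ :=
  ξc i (z i) + (a * (nCount z x (z i) : ℝ) + b)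
    + a * β * ∑ ℓ ∈ Finset.Icc 1 (mCount x (z i)), g ℓ

/-- The term `Φ₄(x,z) = −aβ·Σ_{r∈R} Σ_{ℓ=1}^{m_r(x)} Σ_{k=1}^{ℓ−1} g(k)`. -/
def Phi4 {R : Type*} [Fintype R] [DecidableEq R] {N M : ℕ} (a β : ℝ) (g : ℕ → ℝ)
    (x : Fin M → R) (_z : Fin N → R) : ℝ :=
  - (a * β * ∑ r : R, ∑ ℓ ∈ Finset.Icc 1 (mCount x r), ∑ k ∈ Finset.Icc 1 (ℓ - 1), g k)

/-- The potential function Φ of Theorem 1. -/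
def Phi {R : Type*} [Fintype R] [DecidableEq R] {N M : ℕ} (a b β : ℝ) (g : ℕ → ℝ)
    (ξc : Fin N → R → ℝ) (ξt : Fin M → R → ℝ)
    (x : Fin M → R) (z : Fin N → R) : ℝ :=
  (∑ i, ξc i (z i)) + (∑ j, ξt j (x j))
    + (∑ r : R, ∑ k ∈ Finset.Icc 1 (nCount z x r), (a * (k : ℝ) + b))
    + (∑ r : R, β * (a * (nCount z x r : ℝ) + b) * ∑ ℓ ∈ Finset.Icc 1 (mCount x r), g ℓ)
    + Phi4 a β g x z


section AuxPhi

private lemma sum_diff_pair_aux {R : Type*} [Fintype R] [DecidableEq R] (f f' : R → ℝ)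
    (r₁ r₂ : R) (hne : r₁ ≠ r₂) (hh : ∀ r, r ≠ r₁ → r ≠ r₂ → f r = f' r) :
    (∑ r, f r) - ∑ r, f' r = (f r₁ - f' r₁) + (f r₂ - f' r₂) := by
  rw [← Finset.sum_sub_distrib,
    ← Finset.sum_subset (Finset.subset_univ ({r₁, r₂} : Finset R))]
  · rw [Finset.sum_pair hne]
  · intro r _ hr
    simp only [Finset.mem_insert, Finset.mem_singleton, not_or] at hr
    rw [hh r hr.1 hr.2]; ring

end AuxPhi

/-- for a unilateral car deviation `z' = (z'_i, z_{-i})` with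
`z_i ≠ z'_i`, the term Φ₄ is unchanged (it does not depend on `z`), and the
change in Φ equals the displayed expression, which equals the change in the car
utility. -/
theorem phi_car_deviation {R : Type*} [Fintype R] [DecidableEq R] {N M : ℕ}
    (a b β : ℝ) (g : ℕ → ℝ) (ξc : Fin N → R → ℝ) (ξt : Fin M → R → ℝ)
    (z : Fin N → R) (x : Fin M → R) (i : Fin N) (c : R) (h : z i ≠ c) :
    Phi4 a β g x z = Phi4 a β g x (Function.update z i c) ∧
    Phi a b β g ξc ξt x z - Phi a b β g ξc ξt x (Function.update z i c)
      = ξc i (z i) - ξc i c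
        + ((a * (nCount z x (z i) : ℝ) + b)
            - (a * (nCount (Function.update z i c) x c : ℝ) + b))
        + a * β * ((∑ ℓ ∈ Finset.Icc 1 (mCount x (z i)), g ℓ)
            - ∑ ℓ ∈ Finset.Icc 1 (mCount x c), g ℓ) ∧
    Phi a b β g ξc ξt x z - Phi a b β g ξc ξt x (Function.update z i c)
      = carUtax a b β g ξc i z x - carUtax a b β g ξc i (Function.update z i c) x := by
  classical
  set z' := Function.update z i c with hz'
  -- counting lemmas
  have hset1 : (Finset.univ.filter fun ℓ => z' ℓ = z i)
      = (Finset.univ.filter fun ℓ => z ℓ = z i).erase i := by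
    ext j
    simp only [Finset.mem_filter, Finset.mem_erase, Finset.mem_univ, true_and, hz',
      Function.update_apply]
    by_cases hj : j = i
    · simp [hj, Ne.symm h]
    · simp [hj]
  have hmem1 : i ∈ (Finset.univ.filter fun ℓ => z ℓ = z i) := by simp
  have hset2 : (Finset.univ.filter fun ℓ => z' ℓ = c)
      = insert i (Finset.univ.filter fun ℓ => z ℓ = c) := by
    ext j
    simp only [Finset.mem_filter, Finset.mem_insert, Finset.mem_univ, true_and, hz',
      Function.update_apply]
    by_cases hj : j = i
    · simp [hj]
    · simp [hj]
  have hnotmem2 : i ∉ (Finset.univ.filter fun ℓ => z ℓ = c) := by simp [h]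
  have hn1 : nCount z x (z i) = nCount z' x (z i) + 1 := by
    unfold nCount
    rw [hset1, Finset.card_erase_of_mem hmem1]
    have hpos : 1 ≤ (Finset.univ.filter fun ℓ => z ℓ = z i).card :=
      Finset.card_pos.mpr ⟨i, hmem1⟩
    omega
  have hn2 : nCount z' x c = nCount z x c + 1 := by
    unfold nCount
    rw [hset2, Finset.card_insert_of_notMem hnotmem2]
    omega
  have hn3 : ∀ r, r ≠ z i → r ≠ c → nCount z x r = nCount z' x r := by
    intro r hr1 hr2
    unfold nCount
    congr 2
    ext j
    simp only [Finset.mem_filter, Finset.mem_univ, true_and, hz', Function.update_apply]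
    by_cases hj : j = i
    · simp [hj, Ne.symm hr1, Ne.symm hr2]
    · simp [hj]
  -- term 1
  have h1 : (∑ j, ξc j (z j)) - ∑ j, ξc j (z' j) = ξc i (z i) - ξc i c := by
    rw [← Finset.sum_sub_distrib, Finset.sum_eq_single i]
    · simp [hz']
    · intro j _ hj
      simp [hz', Function.update_of_ne hj]
    · simp
  -- term 3
  have h3 : (∑ r : R, ∑ k ∈ Finset.Icc 1 (nCount z x r), (a * (k : ℝ) + b))
      - ∑ r : R, ∑ k ∈ Finset.Icc 1 (nCount z' x r), (a * (k : ℝ) + b)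
      = (a * (nCount z x (z i) : ℝ) + b) - (a * (nCount z' x c : ℝ) + b) := by
    rw [sum_diff_pair_aux _ _ (z i) c h (fun r hr1 hr2 => by rw [hn3 r hr1 hr2])]
    have e1 : ∑ k ∈ Finset.Icc 1 (nCount z x (z i)), (a * (k : ℝ) + b)
        - ∑ k ∈ Finset.Icc 1 (nCount z' x (z i)), (a * (k : ℝ) + b)
        = a * (nCount z x (z i) : ℝ) + b := by
      rw [hn1, Finset.sum_Icc_succ_top (by omega : 1 ≤ nCount z' x (z i) + 1)]
      push_cast
      ring
    have e2 : ∑ k ∈ Finset.Icc 1 (nCount z x c), (a * (k : ℝ) + b)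
        - ∑ k ∈ Finset.Icc 1 (nCount z' x c), (a * (k : ℝ) + b)
        = -(a * (nCount z' x c : ℝ) + b) := by
      rw [hn2, Finset.sum_Icc_succ_top (by omega : 1 ≤ nCount z x c + 1)]
      push_cast
      ring
    rw [e1, e2]
    ring
  -- term 4
  have h4 : (∑ r : R, β * (a * (nCount z x r : ℝ) + b) * ∑ ℓ ∈ Finset.Icc 1 (mCount x r), g ℓ)
      - ∑ r : R, β * (a * (nCount z' x r : ℝ) + b) * ∑ ℓ ∈ Finset.Icc 1 (mCount x r), g ℓ
      = a * β * ((∑ ℓ ∈ Finset.Icc 1 (mCount x (z i)), g ℓ)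
          - ∑ ℓ ∈ Finset.Icc 1 (mCount x c), g ℓ) := by
    rw [sum_diff_pair_aux _ _ (z i) c h (fun r hr1 hr2 => by rw [hn3 r hr1 hr2])]
    rw [hn1, hn2]
    push_cast
    ring
  have hmain : Phi a b β g ξc ξt x z - Phi a b β g ξc ξt x z'
      = ξc i (z i) - ξc i c
        + ((a * (nCount z x (z i) : ℝ) + b) - (a * (nCount z' x c : ℝ) + b))
        + a * β * ((∑ ℓ ∈ Finset.Icc 1 (mCount x (z i)), g ℓ)
            - ∑ ℓ ∈ Finset.Icc 1 (mCount x c), g ℓ) := by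
    unfold Phi
    rw [← h1, ← h3, ← h4]
    unfold Phi4
    ring
  refine ⟨rfl, hmain, ?_⟩
  rw [hmain]
  unfold carUtax
  rw [show z' i = c from Function.update_self i c z, hn2]
  push_cast
  ring
end
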